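/- arXiv:1406.4572 — 3 statements merged into one kernel-verified Lean document; each statement's English description precedes it below -/
import Mathlib

section
/- Suppose the sandwich matrix P of the Rees matrix semigroup S = M(G; I, Λ; P) is nonsingular (no two rows equal and no two columns equal) and normalized with base points i₀, λ₀. Then for any two distinct elements s₁ = (λ₁,g₁,i₁), s₂ = (λ₂,g₂,i₂) of S, there exist i ∈ I and λ ∈ Λ such that (λ₀,1,i)·s₁·(λ,1,i₀) ≠ (λ₀,1,i)·s₂·(λ,1,i₀). -/
/-- Multiplication of the Rees matrix semigroup `M(G; I, Λ; P)` on the carrier `Λ × G × I`. -/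
def reesMul {G : Type*} [Group G] {I Λ : Type*} (P : I → Λ → G) :
    (Λ × G × I) → (Λ × G × I) → (Λ × G × I) :=
  fun x y => (x.1, x.2.1 * P x.2.2 y.1 * y.2.1, y.2.2)

/-- With a normalized nonsingular sandwich matrix, any two distinct elements of the Rees
matrix semigroup are separated by a term `t(x) = (λ₀,1,i)·x·(λ,1,i₀)`. -/
theorem rees_matrix_separating_term {G : Type*} [Group G] {I Λ : Type*}
    (i₀ : I) (lam₀ : Λ) (P : I → Λ → G)
    (hP₁ : ∀ lam : Λ, P i₀ lam = 1) (hP₂ : ∀ i : I, P i lam₀ = 1)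
    (hrows : ∀ i j : I, i ≠ j → ∃ lam : Λ, P i lam ≠ P j lam)
    (hcols : ∀ lam mu : Λ, lam ≠ mu → ∃ i : I, P i lam ≠ P i mu) :
    ∀ s₁ s₂ : Λ × G × I, s₁ ≠ s₂ →
      ∃ (i : I) (lam : Λ),
        reesMul P (reesMul P (lam₀, 1, i) s₁) (lam, 1, i₀) ≠
          reesMul P (reesMul P (lam₀, 1, i) s₂) (lam, 1, i₀) := by
  rintro ⟨lam₁, g₁, i₁⟩ ⟨lam₂, g₂, i₂⟩ hne
  by_cases h : ∃ lam, g₁ * P i₁ lam ≠ g₂ * P i₂ lam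
  · obtain ⟨lam, hlam⟩ := h
    refine ⟨i₀, lam, ?_⟩
    simp only [reesMul, hP₁, Prod.mk.injEq, one_mul, mul_one]
    intro h'
    exact hlam (congrArg (fun p => p.2.1) h')
  · push_neg at h
    have hg : g₁ = g₂ := by
      have := h lam₀; simpa [hP₂] using this
    have hi : i₁ = i₂ := by
      by_contra hii
      obtain ⟨lam, hlam⟩ := hrows i₁ i₂ hii
      exact hlam (mul_left_cancel ((hg ▸ h lam : g₂ * P i₁ lam = g₂ * P i₂ lam)))
    have hl : lam₁ ≠ lam₂ := by
      intro hll; exact hne (by simp [hll, hg, hi])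
    obtain ⟨i, hilam⟩ := hcols lam₁ lam₂ hl
    refine ⟨i, lam₀, ?_⟩
    simp only [reesMul, hP₂, Prod.mk.injEq, one_mul, mul_one]
    intro h'
    have h2 : P i lam₁ * g₁ = P i lam₂ * g₁ := by
      have := congrArg (fun p => p.2.1) h'
      simpa [hg] using this
    exact hilam (mul_right_cancel h2)
end

section
/- Let S = M(G; I, Λ; P) be a normalized Rees matrix semigroup with base points i₀, λ₀ and 𝟙 = (λ₀,1,i₀). For i ∈ I, λ ∈ Λ define t_{i,λ}(x) = (λ₀,1,i)·x·(λ,1,i₀). Then for any (μ,g,j) ∈ S, t_{i,λ}((μ,g,j))·(t_{i,λ}((μ,g,j)))⁻¹ = 𝟙. Consequently, if P is nonsingular, the diagonal {(x,x) : x ∈ S} ⊆ S² equals the solution set of the system consisting of the equation 𝟙·x·(𝟙·y·𝟙)⁻¹ = 𝟙 together with the equations t_{i,λ}(x)·(t_{i,λ}(y))⁻¹ = 𝟙 for all i ∈ I, λ ∈ Λ. -/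
/-- Inversion of the Rees matrix semigroup: `(λ,g,i)⁻¹ = (λ, (P i λ)⁻¹ g⁻¹ (P i λ)⁻¹, i)`. -/
def reesInv {G : Type*} [Group G] {I Λ : Type*} (P : I → Λ → G) :
    (Λ × G × I) → (Λ × G × I) :=
  fun x => (x.1, (P x.2.2 x.1)⁻¹ * x.2.1⁻¹ * (P x.2.2 x.1)⁻¹, x.2.2)

/-- The term `t_{i,λ}(x) = (λ₀,1,i)·x·(λ,1,i₀)`. -/
def reesTerm {G : Type*} [Group G] {I Λ : Type*} (P : I → Λ → G)
    (i₀ : I) (lam₀ : Λ) (i : I) (lam : Λ) (x : Λ × G × I) : Λ × G × I :=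
  reesMul P (reesMul P (lam₀, 1, i) x) (lam, 1, i₀)

theorem rees_matrix_diagonal_is_algebraic {G : Type*} [Group G] {I Λ : Type*}
    (i₀ : I) (lam₀ : Λ) (P : I → Λ → G)
    (hP₁ : ∀ lam : Λ, P i₀ lam = 1) (hP₂ : ∀ i : I, P i lam₀ = 1)
    (hrows : ∀ i j : I, i ≠ j → ∃ lam : Λ, P i lam ≠ P j lam)
    (hcols : ∀ lam mu : Λ, lam ≠ mu → ∃ i : I, P i lam ≠ P i mu) :
    (∀ (x : Λ × G × I) (i : I) (lam : Λ),
        reesMul P (reesTerm P i₀ lam₀ i lam x) (reesInv P (reesTerm P i₀ lam₀ i lam x)) =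
          (lam₀, 1, i₀)) ∧
    {p : (Λ × G × I) × (Λ × G × I) | p.1 = p.2} =
      {p : (Λ × G × I) × (Λ × G × I) |
        reesMul P (reesMul P (lam₀, 1, i₀) p.1)
            (reesInv P (reesMul P (reesMul P (lam₀, 1, i₀) p.2) (lam₀, 1, i₀))) =
          (lam₀, 1, i₀) ∧
        ∀ (i : I) (lam : Λ),
          reesMul P (reesTerm P i₀ lam₀ i lam p.1)
              (reesInv P (reesTerm P i₀ lam₀ i lam p.2)) = (lam₀, 1, i₀)} := by
  have key : ∀ (x : Λ × G × I) (i : I) (lam : Λ),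
      reesMul P (reesTerm P i₀ lam₀ i lam x) (reesInv P (reesTerm P i₀ lam₀ i lam x)) =
        (lam₀, 1, i₀) := by
    intro x i lam
    simp only [reesMul, reesInv, reesTerm, hP₁, hP₂, Prod.mk.injEq]
    refine ⟨trivial, ?_, trivial⟩
    group
  refine ⟨key, ?_⟩
  ext ⟨⟨mu, g, j⟩, ⟨nu, h, k⟩⟩
  simp only [Set.mem_setOf_eq]
  constructor
  · rintro h'
    rw [h']
    constructor
    · simp [reesMul, reesInv, hP₁, hP₂]
    · intro i lam; exact key _ i lam
  · rintro ⟨h1, h2⟩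
    have hg : g = h := by
      simp [reesMul, reesInv, hP₁, hP₂, mul_assoc] at h1
      have : g * h⁻¹ = 1 := by simpa [mul_assoc] using h1
      exact mul_inv_eq_one.mp this
    have h2' : ∀ (i : I) (lam : Λ),
        P i mu * g * P j lam = P i nu * h * P k lam := by
      intro i lam
      have := h2 i lam
      simp [reesMul, reesInv, reesTerm, hP₁, hP₂, mul_assoc] at this
      have h4 : P i mu * g * P j lam * (P i nu * h * P k lam)⁻¹ = 1 := by
        simpa [mul_assoc, mul_inv_rev] using this
      exact mul_inv_eq_one.mp h4
    have hmu : mu = nu := by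
      by_contra hne
      obtain ⟨i, hi⟩ := hcols mu nu hne
      have := h2' i lam₀
      simp [hP₂, hg] at this
      exact hi this
    have hj : j = k := by
      by_contra hne
      obtain ⟨lam, hl⟩ := hrows j k hne
      have := h2' i₀ lam
      simp [hP₁, hg] at this
      exact hl this
    simp [hg, hmu, hj]
end

section
/- Let G be a group in which the set M_gr = {(x,y) ∈ G² : x = 1 or y = 1} is the solution set of some system of group equations. Then G has no zero-divisors: there do not exist x ≠ 1 and y ≠ 1 in G such that [x, g·y·g⁻¹] = 1 for all g ∈ G. -/
/-- Evaluation of a group word in two variables with constants from `G` (an element of the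
free group on `G ⊕ Fin 2`) at a point `(a, b) ∈ G²`: constants map to themselves, the
variable `x` (i.e. `Sum.inr 0`) to `a` and the variable `y` (i.e. `Sum.inr 1`) to `b`. -/
def evalWord {G : Type*} [Group G] (a b : G) : FreeGroup (G ⊕ Fin 2) →* G :=
  FreeGroup.lift (Sum.elim id (fun n => if n = 0 then a else b))

lemma evalWord_of {G : Type*} [Group G] (a b : G) (s : G ⊕ Fin 2) :
    evalWord a b (FreeGroup.of s) = Sum.elim id (fun n => if n = 0 then a else b) s :=
  FreeGroup.lift_apply_of

lemma evalWord_pure {G : Type*} [Group G] (a b : G) (s : G ⊕ Fin 2) :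
    evalWord a b (pure s) = Sum.elim id (fun n => if n = 0 then a else b) s :=
  FreeGroup.lift_apply_of

/-- If `{(x,y) : x = 1 ∨ y = 1}` is the solution set of a system of group equations over `G`,
then `G` has no zero-divisors. -/
theorem algebraic_Mgr_implies_no_zero_divisors {G : Type*} [Group G]
    (W : Set (FreeGroup (G ⊕ Fin 2)))
    (hW : {p : G × G | p.1 = 1 ∨ p.2 = 1} =
      {p : G × G | ∀ w ∈ W, evalWord p.1 p.2 w = 1}) :
    ¬∃ x y : G, x ≠ 1 ∧ y ≠ 1 ∧ ∀ g : G, x⁻¹ * (g * y * g⁻¹)⁻¹ * x * (g * y * g⁻¹) = 1 := by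
  rintro ⟨x, y, hx, hy, hzd⟩
  set M := Subgroup.normalClosure ({x} : Set G) with hMdef
  set N := Subgroup.normalClosure ({y} : Set G) with hNdef
  -- x commutes with every conjugate of y
  have hxc : ∀ g : G, x * (g * y * g⁻¹) = (g * y * g⁻¹) * x := by
    intro g
    have h := hzd g
    have h2 : (g * y * g⁻¹) * (x⁻¹ * (g * y * g⁻¹)⁻¹ * x * (g * y * g⁻¹)) * (g * y * g⁻¹)⁻¹
        = (g * y * g⁻¹) * 1 * (g * y * g⁻¹)⁻¹ := by rw [h]
    have h3 : (g * y * g⁻¹) * x⁻¹ * (g * y * g⁻¹)⁻¹ * x = 1 := by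
      calc (g * y * g⁻¹) * x⁻¹ * (g * y * g⁻¹)⁻¹ * x
          = (g * y * g⁻¹) * (x⁻¹ * (g * y * g⁻¹)⁻¹ * x * (g * y * g⁻¹)) * (g * y * g⁻¹)⁻¹ := by
            group
        _ = (g * y * g⁻¹) * 1 * (g * y * g⁻¹)⁻¹ := h2
        _ = 1 := by group
    have h4 : (g * y * g⁻¹) * x⁻¹ = x⁻¹ * (g * y * g⁻¹) := by
      have := mul_eq_one_iff_eq_inv.mp h3
      calc (g * y * g⁻¹) * x⁻¹
          = ((g * y * g⁻¹) * x⁻¹ * (g * y * g⁻¹)⁻¹) * (g * y * g⁻¹) := by group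
        _ = x⁻¹ * (g * y * g⁻¹) := by rw [this]
    have h5 : x * ((g * y * g⁻¹) * x⁻¹) * x = x * (x⁻¹ * (g * y * g⁻¹)) * x := by rw [h4]
    calc x * (g * y * g⁻¹) = x * ((g * y * g⁻¹) * x⁻¹) * x := by group
      _ = x * (x⁻¹ * (g * y * g⁻¹)) * x := h5
      _ = (g * y * g⁻¹) * x := by group
  -- every element of N commutes with x
  have hNc : ∀ n ∈ N, x * n = n * x := by
    intro n hn
    have hle : N ≤ Subgroup.centralizer {x} := by
      rw [hNdef]
      show Subgroup.closure (Group.conjugatesOfSet {y}) ≤ _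
      rw [Subgroup.closure_le]
      intro a ha
      rcases Group.mem_conjugatesOfSet_iff.mp ha with ⟨b, hb, hconj⟩
      rw [Set.mem_singleton_iff] at hb
      subst b
      rcases isConj_iff.mp hconj with ⟨c, rfl⟩
      rw [SetLike.mem_coe, Subgroup.mem_centralizer_iff]
      intro h hh
      rw [Set.mem_singleton_iff] at hh; subst h
      exact hxc c
    exact hle hn x rfl
  -- every element of M commutes with every element of N
  have hMN : ∀ m ∈ M, ∀ n ∈ N, m * n = n * m := by
    have hle : M ≤ Subgroup.centralizer (N : Set G) := by
      rw [hMdef]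
      show Subgroup.closure (Group.conjugatesOfSet {x}) ≤ _
      rw [Subgroup.closure_le]
      intro a ha
      rcases Group.mem_conjugatesOfSet_iff.mp ha with ⟨b, hb, hconj⟩
      rw [Set.mem_singleton_iff] at hb
      subst b
      rcases isConj_iff.mp hconj with ⟨c, rfl⟩
      rw [SetLike.mem_coe, Subgroup.mem_centralizer_iff]
      intro n hn
      have hn' : c⁻¹ * n * c ∈ N := by
        have := (Subgroup.normalClosure_normal).conj_mem n hn c⁻¹
        simpa using this
      have hc := hNc _ hn'
      calc n * (c * x * c⁻¹) = c * ((c⁻¹ * n * c) * x) * c⁻¹ := by group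
        _ = c * (x * (c⁻¹ * n * c)) * c⁻¹ := by rw [← hc]
        _ = (c * x * c⁻¹) * n := by group
    intro m hm n hn
    exact (hle hm n hn).symm
  -- membership lemmas via quotients
  have hMmem : ∀ w, (evalWord (1:G) 1 w)⁻¹ * evalWord x 1 w ∈ M := by
    have hhom : (QuotientGroup.mk' M).comp (evalWord x (1:G))
        = (QuotientGroup.mk' M).comp (evalWord (1:G) 1) := by
      apply FreeGroup.ext_hom
      rintro (g | i)
      · simp [evalWord_of]
      · have hx1 : x ∈ M := Subgroup.subset_normalClosure rfl
        fin_cases i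
        · simp [evalWord_of, QuotientGroup.eq_one_iff, hx1]
        · simp [evalWord_of]
    intro w
    have h := DFunLike.congr_fun hhom w
    simp only [MonoidHom.comp_apply, QuotientGroup.mk'_apply] at h
    rw [QuotientGroup.eq] at h
    simpa using M.inv_mem h
  have hNmem : ∀ w, (evalWord (1:G) 1 w)⁻¹ * evalWord 1 y w ∈ N := by
    have hhom : (QuotientGroup.mk' N).comp (evalWord (1:G) y)
        = (QuotientGroup.mk' N).comp (evalWord (1:G) 1) := by
      apply FreeGroup.ext_hom
      rintro (g | i)
      · simp [evalWord_of]
      · have hy1 : y ∈ N := Subgroup.subset_normalClosure rfl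
        fin_cases i
        · simp [evalWord_of]
        · simp [evalWord_of, QuotientGroup.eq_one_iff, hy1]
    intro w
    have h := DFunLike.congr_fun hhom w
    simp only [MonoidHom.comp_apply, QuotientGroup.mk'_apply] at h
    rw [QuotientGroup.eq] at h
    simpa using N.inv_mem h
  -- key identity
  have key : ∀ w, evalWord x y w
      = evalWord x 1 w * (evalWord (1:G) 1 w)⁻¹ * evalWord 1 y w := by
    intro w
    induction w using FreeGroup.induction_on with
    | C1 => simp
    | of s =>
      rcases s with g | i
      · simp [evalWord_of]
      · fin_cases i <;> simp [evalWord_of]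
    | inv_of s _ =>
      rcases s with g | i
      · simp only [map_inv, evalWord_of, Sum.elim_inl, id_eq]
        group
      · fin_cases i <;>
          · simp only [map_inv, evalWord_of, Sum.elim_inr]
            norm_num
    | mul u v hu hv =>
      simp only [map_mul, hu, hv]
      have hm : evalWord x 1 v * (evalWord (1:G) 1 v)⁻¹ ∈ M := by
        have h := hMmem v
        have := (Subgroup.normalClosure_normal).conj_mem _ h (evalWord (1:G) 1 v)
        simpa [mul_assoc] using this
      have hn := hNmem u
      have hcomm := hMN _ hm _ hn
      calc (evalWord x 1 u * (evalWord (1:G) 1 u)⁻¹ * evalWord 1 y u)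
            * (evalWord x 1 v * (evalWord (1:G) 1 v)⁻¹ * evalWord 1 y v)
          = evalWord x 1 u * (((evalWord (1:G) 1 u)⁻¹ * evalWord 1 y u)
            * (evalWord x 1 v * (evalWord (1:G) 1 v)⁻¹)) * evalWord 1 y v := by group
        _ = evalWord x 1 u * ((evalWord x 1 v * (evalWord (1:G) 1 v)⁻¹)
            * ((evalWord (1:G) 1 u)⁻¹ * evalWord 1 y u)) * evalWord 1 y v := by rw [← hcomm]
        _ = evalWord x 1 u * evalWord x 1 v
            * (evalWord (1:G) 1 u * evalWord (1:G) 1 v)⁻¹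
            * (evalWord 1 y u * evalWord 1 y v) := by group
  -- conclude
  have hset := Set.ext_iff.mp hW
  have hA : ∀ w ∈ W, evalWord x (1:G) w = 1 := (hset (x, 1)).mp (Or.inr rfl)
  have hB : ∀ w ∈ W, evalWord (1:G) y w = 1 := (hset (1, y)).mp (Or.inl rfl)
  have hL : ∀ w ∈ W, evalWord (1:G) (1:G) w = 1 := (hset (1, 1)).mp (Or.inl rfl)
  have : x = 1 ∨ y = 1 := by
    refine (hset (x, y)).mpr ?_
    intro w hw
    rw [key w, hA w hw, hB w hw, hL w hw]
    simp
  rcases this with h | h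
  · exact hx h
  · exact hy h
end
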